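/- For every r > 0 and all λ > 0, μ > 0, c > 0, α > 2, the integral ∫_{r/c}^∞ e^{-(λ+μ)τ} τ^{α-1} exp((λ/c)√(c²τ² - r²)) / √(c²τ² - r²) dτ is finite. -/

import Mathlib

open MeasureTheory Real Set

theorem stmt10 (r lam mu c α : ℝ) (hr : 0 < r) (hlam : 0 < lam) (hmu : 0 < mu) (hc : 0 < c)
    (hα : 2 < α) :
    IntegrableOn (fun τ : ℝ =>
        Real.exp (-(lam + mu) * τ) * τ ^ (α - 1) *
          (Real.exp ((lam / c) * Real.sqrt (c ^ 2 * τ ^ 2 - r ^ 2)) /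
            Real.sqrt (c ^ 2 * τ ^ 2 - r ^ 2))) (Ioi (r / c)) := by
  set a := r / c with ha
  have ha0 : 0 < a := div_pos hr hc
  have hca : c * a = r := by rw [ha]; field_simp
  set f : ℝ → ℝ := fun τ =>
      Real.exp (-(lam + mu) * τ) * τ ^ (α - 1) *
        (Real.exp ((lam / c) * Real.sqrt (c ^ 2 * τ ^ 2 - r ^ 2)) /
          Real.sqrt (c ^ 2 * τ ^ 2 - r ^ 2)) with hf
  have hmeas : Measurable f := by
    rw [hf]; fun_prop
  -- generic pointwise facts for τ > a
  have key : ∀ τ : ℝ, a < τ → f τ ≤ Real.exp (-mu * τ) * τ ^ (α - 1) /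
      Real.sqrt (c ^ 2 * τ ^ 2 - r ^ 2) := by
    intro τ hτ
    have hτ0 : 0 < τ := lt_trans ha0 hτ
    have hD : 0 < c ^ 2 * τ ^ 2 - r ^ 2 := by
      have : r < c * τ := by rw [← hca]; exact mul_lt_mul_of_pos_left hτ hc
      nlinarith
    have hsq : Real.sqrt (c ^ 2 * τ ^ 2 - r ^ 2) ≤ c * τ := by
      rw [show c * τ = Real.sqrt ((c * τ) ^ 2) from (Real.sqrt_sq (by positivity)).symm]
      apply Real.sqrt_le_sqrt; nlinarith
    have hexp : Real.exp (-(lam + mu) * τ) * Real.exp ((lam / c) * Real.sqrt (c ^ 2 * τ ^ 2 - r ^ 2))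
        ≤ Real.exp (-mu * τ) := by
      rw [← Real.exp_add]
      apply Real.exp_le_exp.2
      have : (lam / c) * Real.sqrt (c ^ 2 * τ ^ 2 - r ^ 2) ≤ lam * τ := by
        calc (lam / c) * Real.sqrt (c ^ 2 * τ ^ 2 - r ^ 2) ≤ (lam / c) * (c * τ) := by
              apply mul_le_mul_of_nonneg_left hsq (by positivity)
          _ = lam * τ := by field_simp
      linarith
    have h1 : f τ = (Real.exp (-(lam + mu) * τ) * Real.exp ((lam / c) * Real.sqrt (c ^ 2 * τ ^ 2 - r ^ 2)))
        * τ ^ (α - 1) / Real.sqrt (c ^ 2 * τ ^ 2 - r ^ 2) := by ring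
    rw [h1]
    gcongr
  have hfnn : ∀ τ : ℝ, 0 < τ → 0 ≤ f τ := fun τ h => by
    rw [hf]; positivity
  have hle : a ≤ 2 * a := by linarith
  rw [← Ioc_union_Ioi_eq_Ioi hle]
  apply IntegrableOn.union
  · -- near the endpoint
    have hg : IntegrableOn
        (fun τ : ℝ => (2 * a) ^ (α - 1) / Real.sqrt (2 * r * c) * (τ - a) ^ (-(1 / 2) : ℝ))
        (Ioc a (2 * a)) := by
      apply Integrable.const_mul
      have h0 : IntervalIntegrable (fun x : ℝ => x ^ (-(1 / 2) : ℝ)) volume 0 a :=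
        intervalIntegral.intervalIntegrable_rpow' (by norm_num)
      have h1 := h0.comp_sub_right a
      rw [zero_add] at h1
      refine (intervalIntegrable_iff_integrableOn_Ioc_of_le hle).1 ?_
      rw [two_mul]; exact h1
    apply Integrable.mono' hg (hmeas.aestronglyMeasurable.restrict)
    rw [ae_restrict_iff' measurableSet_Ioc]
    filter_upwards with τ hτ
    obtain ⟨hτ1, hτ2⟩ := hτ
    have hτ0 : 0 < τ := lt_trans ha0 hτ1
    rw [Real.norm_of_nonneg (hfnn τ hτ0)]
    have hD2 : 2 * r * c * (τ - a) ≤ c ^ 2 * τ ^ 2 - r ^ 2 := by rw [← hca]; nlinarith [sq_nonneg (c * τ - c * a)]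
    have hsqD : Real.sqrt (2 * r * c) * Real.sqrt (τ - a) ≤
        Real.sqrt (c ^ 2 * τ ^ 2 - r ^ 2) := by
      rw [← Real.sqrt_mul (by positivity)]
      exact Real.sqrt_le_sqrt hD2
    have hnum : Real.exp (-mu * τ) * τ ^ (α - 1) ≤ (2 * a) ^ (α - 1) := by
      have h1 : Real.exp (-mu * τ) ≤ 1 := Real.exp_le_one_iff.2 (by nlinarith)
      have h2 : τ ^ (α - 1) ≤ (2 * a) ^ (α - 1) :=
        Real.rpow_le_rpow hτ0.le hτ2 (by linarith)
      calc Real.exp (-mu * τ) * τ ^ (α - 1) ≤ 1 * ((2 * a) ^ (α - 1)) :=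
            mul_le_mul h1 h2 (Real.rpow_nonneg hτ0.le _) one_pos.le
      _ = (2 * a) ^ (α - 1) := one_mul _
    calc f τ ≤ Real.exp (-mu * τ) * τ ^ (α - 1) / Real.sqrt (c ^ 2 * τ ^ 2 - r ^ 2) :=
          key τ hτ1
      _ ≤ (2 * a) ^ (α - 1) / (Real.sqrt (2 * r * c) * Real.sqrt (τ - a)) :=
          div_le_div₀ (by positivity) hnum
            (mul_pos (Real.sqrt_pos.2 (by positivity)) (Real.sqrt_pos.2 (by linarith))) hsqD
      _ = (2 * a) ^ (α - 1) / Real.sqrt (2 * r * c) * (τ - a) ^ (-(1 / 2) : ℝ) := by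
          rw [Real.rpow_neg (by linarith), ← Real.sqrt_eq_rpow]
          field_simp
  · -- tail
    have hg : IntegrableOn
        (fun τ : ℝ => (1 / r) * (τ ^ (α - 1) * Real.exp (-mu * τ))) (Ioi (2 * a)) := by
      apply Integrable.const_mul
      have h0 := integrableOn_rpow_mul_exp_neg_mul_rpow (p := 1) (s := α - 1) (b := mu)
        (by linarith) one_pos hmu
      simp only [Real.rpow_one] at h0
      exact h0.mono_set (Ioi_subset_Ioi (by linarith))
    apply Integrable.mono' hg (hmeas.aestronglyMeasurable.restrict)
    rw [ae_restrict_iff' measurableSet_Ioi]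
    filter_upwards with τ hτ
    rw [mem_Ioi] at hτ
    have hτ1 : a < τ := by linarith
    have hτ0 : 0 < τ := lt_trans ha0 hτ1
    rw [Real.norm_of_nonneg (hfnn τ hτ0)]
    have hrD : r ≤ Real.sqrt (c ^ 2 * τ ^ 2 - r ^ 2) := by
      have h2r : 2 * r < c * τ := by
        rw [← hca]; nlinarith [mul_pos hc (sub_pos.2 hτ)]
      refine (Real.le_sqrt hr.le (by nlinarith [mul_pos hr hr])).2 ?_
      nlinarith [mul_pos hr hr]
    calc f τ ≤ Real.exp (-mu * τ) * τ ^ (α - 1) / Real.sqrt (c ^ 2 * τ ^ 2 - r ^ 2) :=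
          key τ hτ1
      _ ≤ Real.exp (-mu * τ) * τ ^ (α - 1) / r := by
          gcongr
      _ = (1 / r) * (τ ^ (α - 1) * Real.exp (-mu * τ)) := by ring
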